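/- Symmetry of optimal potentials under symmetric data: if all marginals are equal (μⁱ = ρ for all i) and the cost c_ε(x¹,...,xᵐ) = ε∑_{2≤i<j≤m} w(xⁱ,xʲ) + ∑_{i=2}^m w(x¹,xⁱ) with w symmetric, then there exists a maximizer (φ¹,...,φᵐ) of the regularized dual problem with φ² = φ³ = ... = φᵐ. -/

import Mathlib

set_option maxHeartbeats 1600000

open scoped BigOperators

/-- The interpolating cost `c_ε(x̄) = ε ∑_{0 < i < j} w(x̄ᵢ, x̄ⱼ) + ∑_{i ≠ 0} w(x̄₀, x̄ᵢ)`
on `m + 1` coordinates indexed by `Fin (m+1)`, coordinate `0` playing the role of `x¹`. -/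
noncomputable def cEps {X : Type*} (m : ℕ) (w : X → X → ℝ) (ε : ℝ)
    (xb : Fin (m + 1) → X) : ℝ :=
  ε * (∑ i ∈ Finset.univ.filter (fun i : Fin (m + 1) => i ≠ 0),
        ∑ j ∈ Finset.univ.filter (fun j : Fin (m + 1) => i < j), w (xb i) (xb j))
    + ∑ i ∈ Finset.univ.filter (fun i : Fin (m + 1) => i ≠ 0), w (xb 0) (xb i)

set_option linter.unusedSectionVars false

open Finset

section aux
variable {X : Type*} [Fintype X] (m : ℕ)

private lemma sumA_comp (σ : Equiv.Perm (Fin (m+1))) (h0 : σ 0 = 0) (f : Fin (m+1) → ℝ) :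
    ∑ i ∈ Finset.univ.filter (fun i : Fin (m+1) => i ≠ 0), f (σ i)
      = ∑ i ∈ Finset.univ.filter (fun i : Fin (m+1) => i ≠ 0), f i := by
  have hσ : ∀ i : Fin (m+1), σ i = 0 ↔ i = 0 := by
    intro i
    constructor
    · intro h; apply σ.injective; rw [h, h0]
    · intro h; rw [h, h0]
  rw [Finset.sum_filter, Finset.sum_filter, ← Equiv.sum_comp σ (fun j => if j ≠ 0 then f j else 0)]
  apply Finset.sum_congr rfl
  intro i _
  by_cases h : i = 0 <;> simp [h, hσ]

private lemma inner_lt_sum (i : Fin (m+1)) (f : Fin (m+1) → ℝ) :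
    ∑ j ∈ Finset.univ.filter (fun j : Fin (m+1) => i < j), f j
      = ∑ j ∈ Finset.univ.filter (fun j : Fin (m+1) => j ≠ 0), if i < j then f j else 0 := by
  rw [Finset.sum_filter, Finset.sum_filter]
  apply Finset.sum_congr rfl
  intro j _
  by_cases h : i < j
  · have : j ≠ 0 := by
      intro hj; rw [hj] at h; exact absurd h (Fin.not_lt_zero i)
    simp [h, this]
  · by_cases h0 : j = 0 <;> simp [h, h0]

private lemma pair_identity (w : X → X → ℝ) (hw : ∀ x y, w x y = w y x) (xb : Fin (m+1) → X) :
    ∑ i ∈ Finset.univ.filter (fun i : Fin (m+1) => i ≠ 0),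
      ∑ j ∈ Finset.univ.filter (fun j : Fin (m+1) => j ≠ 0), w (xb i) (xb j)
    = (∑ i ∈ Finset.univ.filter (fun i : Fin (m+1) => i ≠ 0), w (xb i) (xb i))
      + 2 * ∑ i ∈ Finset.univ.filter (fun i : Fin (m+1) => i ≠ 0),
          ∑ j ∈ Finset.univ.filter (fun j : Fin (m+1) => i < j), w (xb i) (xb j) := by
  set A := Finset.univ.filter (fun i : Fin (m+1) => i ≠ 0) with hA
  have split : ∀ i ∈ A, ∀ j ∈ A, w (xb i) (xb j)
      = (if i < j then w (xb i) (xb j) else 0) + (if j < i then w (xb i) (xb j) else 0)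
        + (if j = i then w (xb i) (xb j) else 0) := by
    intro i _ j _
    rcases lt_trichotomy i j with h | h | h
    · simp [h, h.ne', (not_lt_of_gt h)]
    · simp [h, lt_irrefl]
    · simp [h, h.ne, (not_lt_of_gt h)]
  rw [Finset.sum_congr rfl (fun i hi => Finset.sum_congr rfl (fun j hj => split i hi j hj))]
  simp only [Finset.sum_add_distrib]
  have hdiag : ∑ i ∈ A, ∑ j ∈ A, (if j = i then w (xb i) (xb j) else 0) = ∑ i ∈ A, w (xb i) (xb i) := by
    apply Finset.sum_congr rfl
    intro i hi
    rw [Finset.sum_ite_eq' A i (fun j => w (xb i) (xb j))]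
    simp [hi]
  have hswap : ∑ i ∈ A, ∑ j ∈ A, (if j < i then w (xb i) (xb j) else 0)
      = ∑ i ∈ A, ∑ j ∈ A, (if i < j then w (xb i) (xb j) else 0) := by
    rw [Finset.sum_comm]
    apply Finset.sum_congr rfl
    intro i _
    apply Finset.sum_congr rfl
    intro j _
    rw [hw]
  have hD : ∑ i ∈ A, ∑ j ∈ Finset.univ.filter (fun j : Fin (m+1) => i < j), w (xb i) (xb j)
      = ∑ i ∈ A, ∑ j ∈ A, (if i < j then w (xb i) (xb j) else 0) := by
    apply Finset.sum_congr rfl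
    intro i _
    exact inner_lt_sum m i _
  rw [hdiag, hswap, hD]
  ring

lemma cEps_comp (w : X → X → ℝ) (hw : ∀ x y, w x y = w y x) (ε : ℝ)
    (σ : Equiv.Perm (Fin (m+1))) (h0 : σ 0 = 0) (xb : Fin (m+1) → X) :
    cEps m w ε (xb ∘ σ) = cEps m w ε xb := by
  unfold cEps
  set A := Finset.univ.filter (fun i : Fin (m+1) => i ≠ 0) with hA
  have hT2 : ∑ i ∈ A, w ((xb ∘ σ) 0) ((xb ∘ σ) i) = ∑ i ∈ A, w (xb 0) (xb i) := by
    have := sumA_comp m σ h0 (fun i => w (xb 0) (xb i))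
    simpa [Function.comp, h0] using this
  have hU : ∑ i ∈ A, ∑ j ∈ A, w ((xb ∘ σ) i) ((xb ∘ σ) j)
      = ∑ i ∈ A, ∑ j ∈ A, w (xb i) (xb j) := by
    calc ∑ i ∈ A, ∑ j ∈ A, w ((xb ∘ σ) i) ((xb ∘ σ) j)
        = ∑ i ∈ A, ∑ j ∈ A, w (xb (σ i)) (xb j) :=
          Finset.sum_congr rfl fun i _ => sumA_comp m σ h0 (fun j => w (xb (σ i)) (xb j))
      _ = ∑ i ∈ A, ∑ j ∈ A, w (xb i) (xb j) :=
          sumA_comp m σ h0 (fun i => ∑ j ∈ A, w (xb i) (xb j))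
  have hdiagc : ∑ i ∈ A, w ((xb ∘ σ) i) ((xb ∘ σ) i) = ∑ i ∈ A, w (xb i) (xb i) :=
    sumA_comp m σ h0 (fun i => w (xb i) (xb i))
  have h1 := pair_identity m w hw xb
  have h2 := pair_identity m w hw (xb ∘ σ)
  rw [hU, hdiagc, h1] at h2
  have hDeq : ∑ i ∈ A, ∑ j ∈ Finset.univ.filter (fun j : Fin (m+1) => i < j), w ((xb ∘ σ) i) ((xb ∘ σ) j)
      = ∑ i ∈ A, ∑ j ∈ Finset.univ.filter (fun j : Fin (m+1) => i < j), w (xb i) (xb j) := by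
    linarith
  rw [hDeq, hT2]
end aux

noncomputable def Gdual {X : Type*} [Fintype X] (ρ : X → ℝ) (w : X → X → ℝ) (ε η : ℝ)
    (m : ℕ) (ψ : Fin (m+1) → X → ℝ) : ℝ :=
  (∑ i, ∑ x, ψ i x * ρ x)
    - η * ∑ xb : Fin (m + 1) → X,
        Real.exp (((∑ i, ψ i (xb i)) - cEps m w ε xb) / η) * ∏ i, ρ (xb i)

section aux2
variable {X : Type*} [Fintype X] [Nonempty X] {m : ℕ}
  {ρ : X → ℝ} {w : X → X → ℝ} {ε η : ℝ}

lemma sum_prod_rho (hρs : ∑ x, ρ x = 1) :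
    ∑ xb : Fin (m+1) → X, ∏ i, ρ (xb i) = 1 := by
  rw [← Fintype.piFinset_univ, ← Finset.prod_univ_sum]
  simp [hρs]

lemma sum_coord (hρs : ∑ x, ρ x = 1) (f : X → ℝ) (i : Fin (m+1)) :
    ∑ xb : Fin (m+1) → X, f (xb i) * ∏ j, ρ (xb j) = ∑ x, f x * ρ x := by
  have h1 : ∀ xb : Fin (m+1) → X, f (xb i) * ∏ j, ρ (xb j)
      = ∏ j, (if j = i then f (xb j) * ρ (xb j) else ρ (xb j)) := by
    intro xb
    rw [← Finset.mul_prod_erase univ (fun j => ρ (xb j)) (Finset.mem_univ i),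
        ← Finset.mul_prod_erase univ (fun j => if j = i then f (xb j) * ρ (xb j) else ρ (xb j))
          (Finset.mem_univ i)]
    have : ∏ j ∈ univ.erase i, (if j = i then f (xb j) * ρ (xb j) else ρ (xb j))
        = ∏ j ∈ univ.erase i, ρ (xb j) := by
      apply Finset.prod_congr rfl
      intro j hj
      simp [(Finset.mem_erase.mp hj).1]
    rw [this]
    simp [mul_assoc]
  rw [Finset.sum_congr rfl (fun xb _ => h1 xb)]
  rw [← Fintype.piFinset_univ,
    ← Finset.prod_univ_sum (fun _ => univ)
      (fun (j : Fin (m+1)) (x : X) => if j = i then f x * ρ x else ρ x)]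
  rw [← Finset.mul_prod_erase univ
    (fun j => ∑ x, if j = i then f x * ρ x else ρ x) (Finset.mem_univ i)]
  have h2 : ∏ j ∈ univ.erase i, (∑ x, if j = i then f x * ρ x else ρ x) = 1 := by
    apply Finset.prod_eq_one
    intro j hj
    simp [(Finset.mem_erase.mp hj).1, hρs]
  rw [h2, mul_one]
  simp

lemma sum_lin' (hρs : ∑ x, ρ x = 1) (s : Finset (Fin (m+1))) (ψ : Fin (m+1) → X → ℝ) :
    ∑ xb : Fin (m+1) → X, (∑ i ∈ s, ψ i (xb i)) * ∏ j, ρ (xb j)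
      = ∑ i ∈ s, ∑ x, ψ i x * ρ x := by
  have : ∀ xb : Fin (m+1) → X, (∑ i ∈ s, ψ i (xb i)) * ∏ j, ρ (xb j)
      = ∑ i ∈ s, ψ i (xb i) * ∏ j, ρ (xb j) := fun xb => Finset.sum_mul ..
  rw [Finset.sum_congr rfl (fun xb _ => this xb), Finset.sum_comm]
  exact Finset.sum_congr rfl fun i _ => sum_coord hρs (ψ i) i

lemma exp_quadratic (t : ℝ) (ht : 0 ≤ t) : t^2/4 ≤ Real.exp t := by
  have h1 := Real.add_one_le_exp (t/2)
  have h2 : Real.exp (t/2) * Real.exp (t/2) = Real.exp t := by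
    rw [← Real.exp_add]; ring_nf
  nlinarith [Real.exp_pos (t/2), sq_nonneg (t/2 + 1)]

lemma bounded_of_normalized (hρ : ∀ x, 0 < ρ x) (hρs : ∑ x, ρ x = 1) (hη : 0 < η) :
    ∃ R : ℝ, 0 < R ∧ ∀ ψ : Fin (m+1) → X → ℝ,
      (∀ i : Fin (m+1), i ≠ 0 → ∑ x, ψ i x * ρ x = 0) →
      Gdual ρ w ε η m (fun _ _ => 0) ≤ Gdual ρ w ε η m ψ →
      ∀ i x, |ψ i x| ≤ R := by
  classical
  set g0 : ℝ := Gdual ρ w ε η m (fun _ _ => 0) with hg0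
  -- minimum of ρ
  obtain ⟨x₀, -, hx₀⟩ := Finset.exists_min_image univ ρ ⟨Classical.arbitrary X, Finset.mem_univ _⟩
  set ρm : ℝ := ρ x₀ with hρm
  have hρm0 : 0 < ρm := hρ x₀
  have hρmle : ∀ x, ρm ≤ ρ x := fun x => hx₀ x (Finset.mem_univ x)
  -- max of the cost
  obtain ⟨xbM, -, hxbM⟩ := Finset.exists_max_image univ (cEps m w ε)
    (Finset.univ_nonempty (α := Fin (m+1) → X))
  set cM : ℝ := cEps m w ε xbM with hcM
  have hcMle : ∀ xb : Fin (m+1) → X, cEps m w ε xb ≤ cM := fun xb => hxbM xb (Finset.mem_univ xb)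
  -- product lower bound
  set ρmp : ℝ := ρm ^ (m+1) with hρmp
  have hρmp0 : 0 < ρmp := pow_pos hρm0 _
  have hprodlb : ∀ xb : Fin (m+1) → X, ρmp ≤ ∏ i, ρ (xb i) := by
    intro xb
    have : ∏ _i : Fin (m+1), ρm ≤ ∏ i, ρ (xb i) :=
      Finset.prod_le_prod (fun _ _ => le_of_lt hρm0) (fun i _ => hρmle (xb i))
    simpa using this
  have hprodpos : ∀ xb : Fin (m+1) → X, 0 < ∏ i, ρ (xb i) :=
    fun xb => Finset.prod_pos (fun i _ => hρ (xb i))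
  -- the constants
  set a : ℝ := η * ρmp with ha
  have ha0 : 0 < a := mul_pos hη hρmp0
  set b' : ℝ := max (cM - g0) 0 with hb'
  set u1 : ℝ := max 1 ((4*η + 4*b')/a) with hu1
  set S1 : ℝ := η * u1 + cM with hS1
  set M : ℝ := S1 - g0 with hM
  set K : ℝ := cM + η * Real.log (M / (η * ρmp)) with hK
  set U : ℝ := K - g0 with hU
  set P : ℝ := max K U with hP
  set U' : ℝ := max U 0 with hU'
  set K' : ℝ := max K 0 with hK'
  set L0 : ℝ := min (g0 - K') 0 with hL0
  set Q : ℝ := min (-(U'/ρm)) (L0/ρm) with hQ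
  refine ⟨|P| + |Q| + 1, by positivity, ?_⟩
  intro ψ hnorm hG
  set S : ℝ := ∑ x, ψ 0 x * ρ x with hS
  set Z : ℝ := ∑ xb : Fin (m+1) → X,
      Real.exp (((∑ i, ψ i (xb i)) - cEps m w ε xb) / η) * ∏ i, ρ (xb i) with hZ
  have hZpos : 0 < Z := by
    apply Finset.sum_pos
    · intro xb _
      exact mul_pos (Real.exp_pos _) (hprodpos xb)
    · exact Finset.univ_nonempty
  have hL : ∑ i, ∑ x, ψ i x * ρ x = S := by
    rw [Fin.sum_univ_succ]
    have : ∀ j : Fin m, ∑ x, ψ j.succ x * ρ x = 0 := fun j => hnorm j.succ (Fin.succ_ne_zero j)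
    rw [Finset.sum_congr rfl (fun j _ => this j)]
    simp [hS]
  have hGψ : Gdual ρ w ε η m ψ = S - η * Z := by
    rw [Gdual, hL]
  rw [hGψ] at hG
  -- S > g0
  have hSg0 : g0 ≤ S := by
    have hmul : 0 < η * Z := mul_pos hη hZpos
    linarith only [hG, hmul]
  -- exists xb with large sum
  have hexists : ∃ xb : Fin (m+1) → X, S ≤ ∑ i, ψ i (xb i) := by
    by_contra hcon
    push_neg at hcon
    have h1 : ∑ xb : Fin (m+1) → X, (∑ i, ψ i (xb i)) * ∏ j, ρ (xb j)
        < ∑ xb : Fin (m+1) → X, S * ∏ j, ρ (xb j) := by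
      apply Finset.sum_lt_sum_of_nonempty Finset.univ_nonempty
      intro xb _
      exact mul_lt_mul_of_pos_right (hcon xb) (hprodpos xb)
    rw [sum_lin' hρs univ ψ, hL, ← Finset.mul_sum, sum_prod_rho hρs, mul_one] at h1
    exact lt_irrefl S h1
  obtain ⟨xbs, hxbs⟩ := hexists
  -- lower bound on Z
  set u : ℝ := (S - cM)/η with hu
  have hZlb : Real.exp u * ρmp ≤ Z := by
    have h2 : S - cM ≤ (∑ i, ψ i (xbs i)) - cEps m w ε xbs := by
      have := hcMle xbs; linarith
    have h1 : Real.exp u * ρmp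
        ≤ Real.exp (((∑ i, ψ i (xbs i)) - cEps m w ε xbs) / η) * ∏ i, ρ (xbs i) := by
      apply mul_le_mul _ (hprodlb xbs) (le_of_lt hρmp0) (le_of_lt (Real.exp_pos _))
      apply Real.exp_le_exp.mpr
      rw [hu]
      gcongr
    refine le_trans h1 ?_
    rw [hZ]
    exact Finset.single_le_sum
      (f := fun xb : Fin (m+1) → X =>
        Real.exp (((∑ i, ψ i (xb i)) - cEps m w ε xb) / η) * ∏ i, ρ (xb i))
      (fun y _ => le_of_lt (mul_pos (Real.exp_pos _) (hprodpos y))) (Finset.mem_univ xbs)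
  have hSu : η * u = S - cM := by rw [hu]; field_simp
  have hkey : a * Real.exp u ≤ η * u + (cM - g0) := by
    have h3 : η * (Real.exp u * ρmp) ≤ η * Z := mul_le_mul_of_nonneg_left hZlb (le_of_lt hη)
    have h4 : a * Real.exp u = η * (Real.exp u * ρmp) := by rw [ha]; ring
    linarith only [h3, h4, hG, hSu]
  have huu1 : u ≤ u1 := by
    by_contra hcon
    push_neg at hcon
    have hu1' : (1:ℝ) < u := lt_of_le_of_lt (le_max_left _ _) hcon
    have hu2' : (4*η + 4*b')/a < u := lt_of_le_of_lt (le_max_right _ _) hcon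
    have hcross : 4*η + 4*b' < u * a := by rwa [div_lt_iff₀ ha0] at hu2'
    have hupos : (0:ℝ) < u := by linarith
    have hq := exp_quadratic u (le_of_lt hupos)
    have hb1 : cM - g0 ≤ b' := le_max_left _ _
    have hb0 : (0:ℝ) ≤ b' := le_max_right _ _
    have A1 : a * (u^2/4) ≤ a * Real.exp u := mul_le_mul_of_nonneg_left hq (le_of_lt ha0)
    have A4 : b' * 1 ≤ b' * u := mul_le_mul_of_nonneg_left (le_of_lt hu1') hb0
    have A5 : (4*η + 4*b') * u < a * u^2 := by
      calc (4*η + 4*b') * u < u * a * u := mul_lt_mul_of_pos_right hcross hupos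
        _ = a * u^2 := by ring
    linarith only [A1, A4, A5, hkey, hb1]
  have hSS1 : S ≤ S1 := by
    have h6 := mul_le_mul_of_nonneg_left huu1 (le_of_lt hη)
    linarith only [h6, hSu, hS1]
  have hZub : η * Z ≤ M := by rw [hM]; linarith only [hG, hSS1]
  -- uniform upper bound on the sums
  have hKbound : ∀ xb : Fin (m+1) → X, (∑ i, ψ i (xb i)) ≤ K := by
    intro xb
    set v : ℝ := ((∑ i, ψ i (xb i)) - cEps m w ε xb)/η with hv
    have h1 : Real.exp v * ∏ i, ρ (xb i) ≤ Z := by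
      rw [hZ, hv]
      exact Finset.single_le_sum
        (f := fun yb : Fin (m+1) → X =>
          Real.exp (((∑ i, ψ i (yb i)) - cEps m w ε yb) / η) * ∏ i, ρ (yb i))
        (fun y _ => le_of_lt (mul_pos (Real.exp_pos _) (hprodpos y))) (Finset.mem_univ xb)
    have h2 : Real.exp v * (η * ρmp) ≤ M := by
      have h5 : Real.exp v * ρmp ≤ Real.exp v * ∏ i, ρ (xb i) :=
        mul_le_mul_of_nonneg_left (hprodlb xb) (le_of_lt (Real.exp_pos _))
      have h6 : η * (Real.exp v * ρmp) ≤ η * Z :=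
        mul_le_mul_of_nonneg_left (le_trans h5 h1) (le_of_lt hη)
      have e1 : Real.exp v * (η * ρmp) = η * (Real.exp v * ρmp) := by ring
      linarith only [e1, h6, hZub]
    have h3 : Real.exp v ≤ M/(η*ρmp) := by
      rw [le_div_iff₀ (mul_pos hη hρmp0)]
      exact h2
    have h4 : v ≤ Real.log (M/(η*ρmp)) := by
      have := Real.log_le_log (Real.exp_pos v) h3
      rwa [Real.log_exp] at this
    have h5 : (∑ i, ψ i (xb i)) - cEps m w ε xb ≤ η * Real.log (M/(η*ρmp)) := by
      rw [hv, div_le_iff₀ hη] at h4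
      linarith only [h4]
    have h7 := hcMle xb
    rw [hK]; linarith only [h5, h7]
  -- barycentric bound
  have hD : ∀ (i : Fin (m+1)) (x : X),
      ψ i x + ∑ j ∈ univ.erase i, ∑ y, ψ j y * ρ y ≤ K := by
    intro i x
    have hupdate : ∀ yb : Fin (m+1) → X,
        ∑ j, ψ j (Function.update yb i x j) = ψ i x + ∑ j ∈ univ.erase i, ψ j (yb j) := by
      intro yb
      rw [← Finset.add_sum_erase univ (fun j => ψ j (Function.update yb i x j))
        (Finset.mem_univ i)]
      congr 1
      · rw [Function.update_self]
      · apply Finset.sum_congr rfl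
        intro j hj
        rw [Function.update_of_ne (Finset.mem_erase.mp hj).1]
    have hT1 : ∑ yb : Fin (m+1) → X,
        (∑ j, ψ j (Function.update yb i x j)) * ∏ k, ρ (yb k) ≤ K := by
      calc ∑ yb : Fin (m+1) → X, (∑ j, ψ j (Function.update yb i x j)) * ∏ k, ρ (yb k)
          ≤ ∑ yb : Fin (m+1) → X, K * ∏ k, ρ (yb k) := by
            apply Finset.sum_le_sum
            intro yb _
            exact mul_le_mul_of_nonneg_right (hKbound (Function.update yb i x))
              (le_of_lt (hprodpos yb))
        _ = K := by rw [← Finset.mul_sum, sum_prod_rho hρs, mul_one]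
    have hT2 : ∑ yb : Fin (m+1) → X,
        (∑ j, ψ j (Function.update yb i x j)) * ∏ k, ρ (yb k)
        = ψ i x + ∑ j ∈ univ.erase i, ∑ y, ψ j y * ρ y := by
      rw [Finset.sum_congr rfl (fun yb _ => by rw [hupdate yb])]
      have hsplit : ∀ yb : Fin (m+1) → X,
          (ψ i x + ∑ j ∈ univ.erase i, ψ j (yb j)) * ∏ k, ρ (yb k)
          = ψ i x * ∏ k, ρ (yb k)
            + (∑ j ∈ univ.erase i, ψ j (yb j)) * ∏ k, ρ (yb k) := fun yb => add_mul _ _ _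
      rw [Finset.sum_congr rfl (fun yb _ => hsplit yb), Finset.sum_add_distrib,
        ← Finset.mul_sum, sum_prod_rho hρs, mul_one, sum_lin' hρs (univ.erase i) ψ]
    linarith only [hT1, hT2.ge]
  -- upper bounds
  have hubK : ∀ x : X, ψ 0 x ≤ K := by
    intro x
    have h1 := hD 0 x
    have h2 : ∑ j ∈ univ.erase (0 : Fin (m+1)), ∑ y, ψ j y * ρ y = 0 :=
      Finset.sum_eq_zero (fun j hj => hnorm j (Finset.mem_erase.mp hj).1)
    rw [h2] at h1
    linarith only [h1]
  have hubU : ∀ (i : Fin (m+1)), i ≠ 0 → ∀ x : X, ψ i x ≤ U := by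
    intro i hi x
    have h1 := hD i x
    have h2 : ∑ j ∈ univ.erase i, ∑ y, ψ j y * ρ y = S := by
      rw [Finset.sum_eq_single_of_mem 0
        (Finset.mem_erase.mpr ⟨Ne.symm hi, Finset.mem_univ 0⟩)
        (fun j _ hj0 => hnorm j hj0)]
    rw [h2] at h1
    rw [hU]; linarith only [h1, hSg0]
  have hub : ∀ (i : Fin (m+1)) (x : X), ψ i x ≤ P := by
    intro i x
    by_cases hi : i = 0
    · subst hi; exact le_trans (hubK x) (le_max_left _ _)
    · exact le_trans (hubU i hi x) (le_max_right _ _)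
  -- lower bounds
  have herase : ∀ (i : Fin (m+1)) (x : X) (C : ℝ), (∀ y, ψ i y ≤ C) → 0 ≤ C →
      ∑ y ∈ univ.erase x, ψ i y * ρ y ≤ C := by
    intro i x C hC hC0
    calc ∑ y ∈ univ.erase x, ψ i y * ρ y ≤ ∑ y ∈ univ.erase x, C * ρ y := by
          apply Finset.sum_le_sum
          intro y _
          exact mul_le_mul_of_nonneg_right (hC y) (le_of_lt (hρ y))
      _ ≤ ∑ y, C * ρ y := by
          apply Finset.sum_le_sum_of_subset_of_nonneg (Finset.erase_subset x univ)
          intro y _ _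
          exact mul_nonneg hC0 (le_of_lt (hρ y))
      _ = C := by rw [← Finset.mul_sum, hρs, mul_one]
  have hlb : ∀ (i : Fin (m+1)) (x : X), Q ≤ ψ i x := by
    intro i x
    have hsplit : ∑ y, ψ i y * ρ y = ψ i x * ρ x + ∑ y ∈ univ.erase x, ψ i y * ρ y :=
      (Finset.add_sum_erase univ (fun y => ψ i y * ρ y) (Finset.mem_univ x)).symm
    by_cases hi : i = 0
    · subst hi
      have h1 : ∑ y ∈ univ.erase x, ψ 0 y * ρ y ≤ K' :=
        herase 0 x K' (fun y => le_trans (hubK y) (le_max_left _ _)) (le_max_right _ _)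
      have h2 : L0 ≤ ψ 0 x * ρ x := by
        have : ∑ y, ψ 0 y * ρ y = S := rfl
        rw [this] at hsplit
        have hL0' : L0 ≤ g0 - K' := min_le_left _ _
        linarith only [hsplit, h1, hL0', hSg0]
      have h3 : L0/ρ x ≤ ψ 0 x := by
        rw [div_le_iff₀ (hρ x)]
        linarith only [h2]
      have h4 : L0/ρm ≤ L0/ρ x := by
        have hL0n : L0 ≤ 0 := min_le_right _ _
        rw [div_le_div_iff₀ hρm0 (hρ x)]
        exact mul_le_mul_of_nonpos_left (hρmle x) hL0n
      exact le_trans (min_le_right _ _) (le_trans h4 h3)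
    · have h1 : ∑ y ∈ univ.erase x, ψ i y * ρ y ≤ U' :=
        herase i x U' (fun y => le_trans (hubU i hi y) (le_max_left _ _)) (le_max_right _ _)
      have h2 : -U' ≤ ψ i x * ρ x := by
        have h0 := hnorm i hi
        rw [hsplit] at h0
        linarith only [h0, h1]
      have h3 : (-U')/ρ x ≤ ψ i x := by
        rw [div_le_iff₀ (hρ x)]
        linarith only [h2]
      have h4 : (-U')/ρm ≤ (-U')/ρ x := by
        have hU'0 : (0:ℝ) ≤ U' := le_max_right _ _
        have hU'n : -U' ≤ 0 := by linarith only [hU'0]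
        rw [div_le_div_iff₀ hρm0 (hρ x)]
        exact mul_le_mul_of_nonpos_left (hρmle x) hU'n
      have h5 : Q ≤ (-U')/ρm := by
        rw [neg_div]
        exact min_le_left _ _
      exact le_trans h5 (le_trans h4 h3)
  intro i x
  rw [abs_le]
  constructor
  · have h2 := hlb i x
    have h1 : -|Q| ≤ Q := neg_abs_le Q
    linarith only [h1, h2, abs_nonneg P]
  · have h2 := hub i x
    have h1 : P ≤ |P| := le_abs_self P
    linarith only [h1, h2, abs_nonneg Q]
end aux2

section aux3
variable {X : Type*} [Fintype X] [Nonempty X] {m : ℕ}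
  {ρ : X → ℝ} {w : X → X → ℝ} {ε η : ℝ}

lemma Gdual_continuous : Continuous (Gdual ρ w ε η m) := by
  unfold Gdual
  apply Continuous.sub
  · apply continuous_finset_sum
    intro i _
    apply continuous_finset_sum
    intro x _
    exact ((continuous_apply x).comp (continuous_apply i : Continuous fun p : Fin (m+1) → X → ℝ => p i)).mul continuous_const
  · apply Continuous.mul continuous_const
    apply continuous_finset_sum
    intro xb _
    apply Continuous.mul _ continuous_const
    apply Real.continuous_exp.comp
    apply Continuous.div_const
    apply Continuous.sub _ continuous_const
    apply continuous_finset_sum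
    intro i _
    exact (continuous_apply (xb i)).comp (continuous_apply i)

lemma Gdual_shift (hρs : ∑ x, ρ x = 1) (ψ : Fin (m+1) → X → ℝ)
    (c : Fin (m+1) → ℝ) (hc : ∑ i, c i = 0) :
    Gdual ρ w ε η m (fun i x => ψ i x + c i) = Gdual ρ w ε η m ψ := by
  unfold Gdual
  have h1 : ∑ i, ∑ x, (ψ i x + c i) * ρ x = ∑ i, ∑ x, ψ i x * ρ x := by
    have : ∀ i : Fin (m+1), ∑ x, (ψ i x + c i) * ρ x = (∑ x, ψ i x * ρ x) + c i := by
      intro i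
      rw [Finset.sum_congr rfl (fun x _ => add_mul (ψ i x) (c i) (ρ x)),
        Finset.sum_add_distrib, ← Finset.mul_sum, hρs, mul_one]
    rw [Finset.sum_congr rfl (fun i _ => this i), Finset.sum_add_distrib, hc, add_zero]
  have h2 : ∀ xb : Fin (m+1) → X, ∑ i, (ψ i (xb i) + c i) = ∑ i, ψ i (xb i) := by
    intro xb
    rw [Finset.sum_add_distrib, hc, add_zero]
  rw [h1]
  congr 2
  exact Finset.sum_congr rfl fun xb _ => by rw [h2]

lemma exists_normalized (hρs : ∑ x, ρ x = 1) (ψ : Fin (m+1) → X → ℝ) :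
    ∃ ψ' : Fin (m+1) → X → ℝ, Gdual ρ w ε η m ψ' = Gdual ρ w ε η m ψ ∧
      ∀ i : Fin (m+1), i ≠ 0 → ∑ x, ψ' i x * ρ x = 0 := by
  set E : Fin (m+1) → ℝ := fun i => ∑ x, ψ i x * ρ x with hE
  set c : Fin (m+1) → ℝ := fun i => if i = 0 then ∑ j : Fin m, E j.succ else - E i with hc
  have hcsum : ∑ i, c i = 0 := by
    rw [Fin.sum_univ_succ]
    have : ∀ j : Fin m, c j.succ = - E j.succ := by
      intro j; simp [hc, Fin.succ_ne_zero j]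
    rw [Finset.sum_congr rfl (fun j _ => this j)]
    simp [hc]
  refine ⟨fun i x => ψ i x + c i, Gdual_shift hρs ψ c hcsum, ?_⟩
  intro i hi
  have : ∑ x, (ψ i x + c i) * ρ x = E i + c i := by
    rw [Finset.sum_congr rfl (fun x _ => add_mul (ψ i x) (c i) (ρ x)),
      Finset.sum_add_distrib, ← Finset.mul_sum, hρs, mul_one]
  rw [this]
  simp [hc, hi]

end aux3

def permFix (m : ℕ) (k : Fin (m+1)) : Equiv.Perm (Fin (m+1+1)) :=
  ((finSuccEquiv (m+1)).symm.permCongr) ((Equiv.addLeft k).optionCongr)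

lemma permFix_zero (m : ℕ) (k : Fin (m+1)) : permFix m k 0 = 0 := by
  simp [permFix, Equiv.permCongr_apply]

lemma permFix_succ (m : ℕ) (k : Fin (m+1)) (j : Fin (m+1)) :
    permFix m k j.succ = (k + j).succ := by
  simp [permFix, Equiv.permCongr_apply]

section aux4
variable {X : Type*} [Fintype X] [Nonempty X] {m : ℕ}
  {ρ : X → ℝ} {w : X → X → ℝ} {ε η : ℝ}

lemma Z_comp (hw : ∀ x y, w x y = w y x) (σ : Equiv.Perm (Fin (m+1))) (h0 : σ 0 = 0)
    (φ : Fin (m+1) → X → ℝ) :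
    ∑ xb : Fin (m+1) → X,
        Real.exp (((∑ i, φ (σ i) (xb i)) - cEps m w ε xb)/η) * ∏ i, ρ (xb i)
      = ∑ xb : Fin (m+1) → X,
        Real.exp (((∑ i, φ i (xb i)) - cEps m w ε xb)/η) * ∏ i, ρ (xb i) := by
  have h0' : σ.symm 0 = 0 := by
    apply σ.injective; rw [Equiv.apply_symm_apply, h0]
  let e : (Fin (m+1) → X) ≃ (Fin (m+1) → X) :=
    { toFun := fun xb => xb ∘ σ.symm
      invFun := fun xb => xb ∘ σ
      left_inv := fun xb => by funext i; simp
      right_inv := fun xb => by funext i; simp }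
  have key : ∀ xb : Fin (m+1) → X,
      Real.exp (((∑ i, φ i (xb (σ.symm i))) - cEps m w ε (xb ∘ σ.symm))/η)
          * ∏ i, ρ (xb (σ.symm i))
      = Real.exp (((∑ i, φ (σ i) (xb i)) - cEps m w ε xb)/η) * ∏ i, ρ (xb i) := by
    intro xb
    rw [cEps_comp m w hw ε σ.symm h0' xb]
    have hs : ∑ i, φ i (xb (σ.symm i)) = ∑ i, φ (σ i) (xb i) := by
      rw [← Equiv.sum_comp σ (fun i => φ i (xb (σ.symm i)))]
      simp
    have hp : ∏ i, ρ (xb (σ.symm i)) = ∏ i, ρ (xb i) := by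
      rw [← Equiv.prod_comp σ (fun i => ρ (xb (σ.symm i)))]
      simp
    rw [hs, hp]
  rw [← Equiv.sum_comp e
    (fun xb => Real.exp (((∑ i, φ i (xb i)) - cEps m w ε xb)/η) * ∏ i, ρ (xb i))]
  exact Finset.sum_congr rfl fun xb _ => (key xb).symm

end aux4

/-- Symmetry of optimal dual potentials under symmetric data: if all marginals equal `ρ`
and the cost is `c_ε` with `w` symmetric, then there is a maximizer `(φ¹,...,φᵐ)` of the
regularized dual problem with `φ² = φ³ = ... = φᵐ` (there are `m + 1 ≥ 2` marginals). -/
theorem stmt_19 {X : Type*} [Fintype X] [Nonempty X]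
    (ρ : X → ℝ) (hρ : ∀ x, 0 < ρ x) (hρs : ∑ x, ρ x = 1)
    (w : X → X → ℝ) (hw : ∀ x y, w x y = w y x)
    (ε η : ℝ) (hε0 : 0 ≤ ε) (hε1 : ε ≤ 1) (hη : 0 < η)
    (m : ℕ) (hm : 1 ≤ m) :
    ∃ φ : Fin (m + 1) → X → ℝ,
      (∀ ψ : Fin (m + 1) → X → ℝ,
        ((∑ i, ∑ x, ψ i x * ρ x)
            - η * ∑ xb : Fin (m + 1) → X,
                Real.exp (((∑ i, ψ i (xb i)) - cEps m w ε xb) / η) * ∏ i, ρ (xb i))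
          ≤ (∑ i, ∑ x, φ i x * ρ x)
            - η * ∑ xb : Fin (m + 1) → X,
                Real.exp (((∑ i, φ i (xb i)) - cEps m w ε xb) / η) * ∏ i, ρ (xb i))
      ∧ ∀ i j : Fin (m + 1), i ≠ 0 → j ≠ 0 → φ i = φ j := by
  classical
  suffices h : ∃ φ : Fin (m+1) → X → ℝ,
      (∀ ψ : Fin (m+1) → X → ℝ, Gdual ρ w ε η m ψ ≤ Gdual ρ w ε η m φ)
      ∧ ∀ i j : Fin (m+1), i ≠ 0 → j ≠ 0 → φ i = φ j by
    obtain ⟨φ, h1, h2⟩ := h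
    exact ⟨φ, h1, h2⟩
  obtain ⟨m', rfl⟩ : ∃ m', m = m' + 1 := ⟨m - 1, by omega⟩
  set n : ℕ := m' + 1 with hn
  -- Step 1: existence of a global maximizer
  obtain ⟨R, hR0, hRbound⟩ := bounded_of_normalized (m := n) (w := w) (ε := ε) hρ hρs hη
  set Box : Set (Fin (n+1) → X → ℝ) :=
    Set.univ.pi (fun _ => Set.univ.pi (fun _ => Set.Icc (-R) R)) with hBox
  have hBoxCompact : IsCompact Box :=
    isCompact_univ_pi (fun _ => isCompact_univ_pi (fun _ => isCompact_Icc))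
  have hmem : ∀ ψ : Fin (n+1) → X → ℝ, (∀ i x, |ψ i x| ≤ R) → ψ ∈ Box := by
    intro ψ hb
    rw [hBox]
    intro i _
    intro x _
    rw [Set.mem_Icc, ← abs_le]
    exact hb i x
  have h0mem : (fun (_ : Fin (n+1)) (_ : X) => (0:ℝ)) ∈ Box := by
    apply hmem
    apply hRbound
    · intro i _
      simp
    · exact le_refl _
  obtain ⟨φ₀, hφ₀mem, hφ₀max⟩ := hBoxCompact.exists_isMaxOn ⟨_, h0mem⟩
    (Gdual_continuous (ρ := ρ) (w := w) (ε := ε) (η := η) (m := n)).continuousOn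
  have hglobal : ∀ ψ : Fin (n+1) → X → ℝ, Gdual ρ w ε η n ψ ≤ Gdual ρ w ε η n φ₀ := by
    intro ψ
    obtain ⟨ψ', hψ'G, hψ'norm⟩ := exists_normalized (w := w) (ε := ε) (η := η) hρs ψ
    rcases le_or_gt (Gdual ρ w ε η n (fun _ _ => 0)) (Gdual ρ w ε η n ψ') with hc | hc
    · have hb := hRbound ψ' hψ'norm hc
      have := hφ₀max (hmem ψ' hb)
      rw [← hψ'G]
      exact this
    · have h1 : Gdual ρ w ε η n (fun _ _ => 0) ≤ Gdual ρ w ε η n φ₀ := hφ₀max h0mem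
      rw [← hψ'G]
      exact le_trans (le_of_lt hc) h1
  -- Step 2: symmetrize the maximizer
  have hncast : ((n:ℕ):ℝ) ≠ 0 := Nat.cast_ne_zero.mpr (Nat.succ_ne_zero m')
  set φt : Fin (n+1) → X → ℝ :=
    fun i x => ((n:ℝ))⁻¹ * ∑ k : Fin n, φ₀ (permFix m' k i) x with hφt
  have hw1 : ∑ _k : Fin n, (n:ℝ)⁻¹ = 1 := by
    rw [Finset.sum_const, Finset.card_univ, Fintype.card_fin, nsmul_eq_mul]
    field_simp
  -- symmetry of φt
  have hsym : ∀ i j : Fin (n+1), i ≠ 0 → j ≠ 0 → φt i = φt j := by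
    have hval : ∀ (j : Fin n) (x : X),
        φt (j.succ) x = (n:ℝ)⁻¹ * ∑ k : Fin n, φ₀ (k.succ) x := by
      intro j x
      simp only [hφt]
      congr 1
      calc ∑ k : Fin n, φ₀ (permFix m' k j.succ) x
          = ∑ k : Fin n, φ₀ ((k+j).succ) x :=
            Finset.sum_congr rfl fun k _ => by rw [permFix_succ]
        _ = ∑ k : Fin n, φ₀ (k.succ) x :=
            Equiv.sum_comp (Equiv.addRight j) (fun k => φ₀ (k.succ) x)
    intro i j hi hj
    obtain ⟨i', rfl⟩ := Fin.exists_succ_eq.mpr hi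
    obtain ⟨j', rfl⟩ := Fin.exists_succ_eq.mpr hj
    funext x
    rw [hval i' x, hval j' x]
  -- G φt ≥ G φ₀
  have hlin : ∑ i, ∑ x, φt i x * ρ x = ∑ i, ∑ x, φ₀ i x * ρ x := by
    have hpoint : ∀ (i : Fin (n+1)) (x : X),
        φt i x * ρ x = ∑ k : Fin n, (n:ℝ)⁻¹ * (φ₀ (permFix m' k i) x * ρ x) := by
      intro i x
      simp only [hφt]
      rw [Finset.mul_sum, Finset.sum_mul]
      exact Finset.sum_congr rfl fun k _ => mul_assoc _ _ _
    calc ∑ i, ∑ x, φt i x * ρ x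
        = ∑ i, ∑ x, ∑ k : Fin n, (n:ℝ)⁻¹ * (φ₀ (permFix m' k i) x * ρ x) :=
          Finset.sum_congr rfl fun i _ => Finset.sum_congr rfl fun x _ => hpoint i x
      _ = ∑ i, ∑ k : Fin n, ∑ x, (n:ℝ)⁻¹ * (φ₀ (permFix m' k i) x * ρ x) :=
          Finset.sum_congr rfl fun i _ => Finset.sum_comm
      _ = ∑ k : Fin n, ∑ i, ∑ x, (n:ℝ)⁻¹ * (φ₀ (permFix m' k i) x * ρ x) :=
          Finset.sum_comm
      _ = ∑ k : Fin n, (n:ℝ)⁻¹ * ∑ i, ∑ x, (φ₀ (permFix m' k i) x * ρ x) := by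
          refine Finset.sum_congr rfl fun k _ => ?_
          simp only [← Finset.mul_sum]
      _ = ∑ k : Fin n, (n:ℝ)⁻¹ * ∑ i, ∑ x, (φ₀ i x * ρ x) := by
          refine Finset.sum_congr rfl fun k _ => ?_
          rw [Equiv.sum_comp (permFix m' k) (fun i => ∑ x, φ₀ i x * ρ x)]
      _ = ∑ i, ∑ x, φ₀ i x * ρ x := by
          rw [← Finset.sum_mul, hw1, one_mul]
  have hZpt : ∀ xb : Fin (n+1) → X,
      Real.exp (((∑ i, φt i (xb i)) - cEps n w ε xb)/η)
        ≤ ∑ k : Fin n, (n:ℝ)⁻¹ *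
            Real.exp (((∑ i, φ₀ (permFix m' k i) (xb i)) - cEps n w ε xb)/η) := by
    intro xb
    have hsum : ∑ i, φt i (xb i)
        = (n:ℝ)⁻¹ * ∑ k : Fin n, ∑ i, φ₀ (permFix m' k i) (xb i) := by
      calc ∑ i, φt i (xb i)
          = ∑ i, (n:ℝ)⁻¹ * ∑ k : Fin n, φ₀ (permFix m' k i) (xb i) := rfl
        _ = (n:ℝ)⁻¹ * ∑ i, ∑ k : Fin n, φ₀ (permFix m' k i) (xb i) := by
            rw [← Finset.mul_sum]
        _ = (n:ℝ)⁻¹ * ∑ k : Fin n, ∑ i, φ₀ (permFix m' k i) (xb i) := by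
            rw [Finset.sum_comm]
    have harg : ((∑ i, φt i (xb i)) - cEps n w ε xb)/η
        = ∑ k : Fin n, (n:ℝ)⁻¹ •
            (((∑ i, φ₀ (permFix m' k i) (xb i)) - cEps n w ε xb)/η) := by
      simp only [smul_eq_mul]
      rw [hsum]
      rw [show (∑ k : Fin n, (n:ℝ)⁻¹ *
            (((∑ i, φ₀ (permFix m' k i) (xb i)) - cEps n w ε xb)/η))
          = (n:ℝ)⁻¹ * ((∑ k : Fin n,
              ((∑ i, φ₀ (permFix m' k i) (xb i)) - cEps n w ε xb))/η) from by
        rw [← Finset.mul_sum, ← Finset.sum_div]]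
      rw [Finset.sum_sub_distrib, Finset.sum_const, Finset.card_univ, Fintype.card_fin,
        nsmul_eq_mul]
      field_simp
      all_goals ring
    rw [harg]
    have hconv := convexOn_exp.map_sum_le (t := (univ : Finset (Fin n)))
      (w := fun _ => (n:ℝ)⁻¹)
      (p := fun k => (((∑ i, φ₀ (permFix m' k i) (xb i)) - cEps n w ε xb)/η))
      (fun _ _ => by positivity) hw1 (fun _ _ => Set.mem_univ _)
    simpa [smul_eq_mul] using hconv
  have hZle : ∑ xb : Fin (n+1) → X,
        Real.exp (((∑ i, φt i (xb i)) - cEps n w ε xb)/η) * ∏ i, ρ (xb i)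
      ≤ ∑ xb : Fin (n+1) → X,
        Real.exp (((∑ i, φ₀ i (xb i)) - cEps n w ε xb)/η) * ∏ i, ρ (xb i) := by
    have hprodnn : ∀ xb : Fin (n+1) → X, (0:ℝ) ≤ ∏ i, ρ (xb i) :=
      fun xb => Finset.prod_nonneg (fun i _ => le_of_lt (hρ (xb i)))
    calc ∑ xb : Fin (n+1) → X,
          Real.exp (((∑ i, φt i (xb i)) - cEps n w ε xb)/η) * ∏ i, ρ (xb i)
        ≤ ∑ xb : Fin (n+1) → X,
            (∑ k : Fin n, (n:ℝ)⁻¹ *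
              Real.exp (((∑ i, φ₀ (permFix m' k i) (xb i)) - cEps n w ε xb)/η))
            * ∏ i, ρ (xb i) := by
          apply Finset.sum_le_sum
          intro xb _
          exact mul_le_mul_of_nonneg_right (hZpt xb) (hprodnn xb)
      _ = ∑ xb : Fin (n+1) → X, ∑ k : Fin n,
            ((n:ℝ)⁻¹ *
              Real.exp (((∑ i, φ₀ (permFix m' k i) (xb i)) - cEps n w ε xb)/η))
            * ∏ i, ρ (xb i) :=
          Finset.sum_congr rfl fun xb _ => Finset.sum_mul _ _ _
      _ = ∑ k : Fin n, ∑ xb : Fin (n+1) → X,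
            ((n:ℝ)⁻¹ *
              Real.exp (((∑ i, φ₀ (permFix m' k i) (xb i)) - cEps n w ε xb)/η))
            * ∏ i, ρ (xb i) := Finset.sum_comm
      _ = ∑ k : Fin n, (n:ℝ)⁻¹ * ∑ xb : Fin (n+1) → X,
            Real.exp (((∑ i, φ₀ (permFix m' k i) (xb i)) - cEps n w ε xb)/η)
              * ∏ i, ρ (xb i) := by
          refine Finset.sum_congr rfl fun k _ => ?_
          rw [Finset.mul_sum]
          exact Finset.sum_congr rfl fun xb _ => mul_assoc _ _ _
      _ = ∑ k : Fin n, (n:ℝ)⁻¹ * ∑ xb : Fin (n+1) → X,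
            Real.exp (((∑ i, φ₀ i (xb i)) - cEps n w ε xb)/η) * ∏ i, ρ (xb i) := by
          refine Finset.sum_congr rfl fun k _ => ?_
          rw [Z_comp hw (permFix m' k) (permFix_zero m' k) φ₀]
      _ = ∑ xb : Fin (n+1) → X,
            Real.exp (((∑ i, φ₀ i (xb i)) - cEps n w ε xb)/η) * ∏ i, ρ (xb i) := by
          rw [← Finset.sum_mul, hw1, one_mul]
  have himp : Gdual ρ w ε η n φ₀ ≤ Gdual ρ w ε η n φt := by
    unfold Gdual
    rw [hlin]
    have := mul_le_mul_of_nonneg_left hZle (le_of_lt hη)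
    linarith only [this]
  exact ⟨φt, fun ψ => le_trans (hglobal ψ) himp, hsym⟩
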